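/- Suppose u is a string over Γ ∪ {□} and Y is a subset of indices of u such that every index of u outside Y carries □, and there is a string v over Γ ∪ {□} with |v| = |Y| such that the character of u at the k-th smallest element of Y equals the character of v at index k, for all k < |Y|. Then d(u) = d(v). -/

import Mathlib

/-- Strings over `Γ ∪ {□}` are lists of `Option Γ`, `none` is the blank `□`;
`del` deletes all blanks. -/
def del {Γ : Type} (s : List (Option Γ)) : List Γ := s.reduceOption

lemma filterMap_sublist_eq {α β : Type*} {f : α → Option β} {L M : List α}
    (h : List.Sublist L M) (hnd : M.Nodup) (hz : ∀ i ∈ M, i ∉ L → f i = none) :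
    M.filterMap f = L.filterMap f := by
  induction h with
  | slnil => rfl
  | cons a h ih =>
    rename_i L' M'
    have hnd' := hnd.of_cons
    have ha : f a = none := hz a (List.mem_cons_self) (fun hmem => (hnd.notMem (h.subset hmem)))
    simp [List.filterMap_cons, ha,
      ih hnd' (fun i hi hni => hz i (List.mem_cons_of_mem a hi) hni)]
  | cons_cons a h ih =>
    rename_i L' M'
    have hnd' := hnd.of_cons
    have : M'.filterMap f = L'.filterMap f := by
      refine ih hnd' (fun i hi hni => hz i (List.mem_cons_of_mem a hi) ?_)
      simp only [List.mem_cons, not_or]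
      exact ⟨fun he => hnd.notMem (he ▸ hi), hni⟩
    simp [List.filterMap_cons, this]

theorem stmt_13 {Γ : Type} (u v : List (Option Γ)) (Y : Finset ℕ)
    (hY : ∀ x ∈ Y, x < u.length)
    (hblank : ∀ x, x < u.length → x ∉ Y → u[x]? = some none)
    (hlen : v.length = Y.card)
    (hchar : ∀ k, k < Y.card → u[(Y.sort (· ≤ ·)).getD k 0]? = v[k]?) :
    del u = del v := by
  set n := u.length with hn
  set L := Y.sort (· ≤ ·) with hL
  set f : ℕ → Option Γ := fun i => u.getD i none with hf
  have hLlen : L.length = Y.card := Y.length_sort _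
  have hLmem : ∀ i ∈ L, i ∈ Y := fun i hi => (Y.mem_sort _).1 hi
  -- L is a sublist of range n
  have hsub : List.Sublist L (List.range n) := by
    refine List.sublist_of_subperm_of_pairwise ?_ (Y.pairwise_sort _) List.pairwise_le_range
    refine List.subperm_of_subset (Y.sort_nodup _) ?_
    intro i hi
    exact List.mem_range.2 (hY i (hLmem i hi))
  -- v = L.map f
  have hv : v = L.map f := by
    apply List.ext_getElem?
    intro k
    by_cases hk : k < Y.card
    · have hkL : k < L.length := hLlen ▸ hk
      have hidx : L.getD k 0 = L[k] := List.getD_eq_getElem L 0 hkL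
      have hlt : L[k] < n := hY _ (hLmem _ (L.getElem_mem hkL))
      have h1 : u[L.getD k 0]? = some (f L[k]) := by
        rw [hidx, List.getElem?_eq_getElem hlt]
        simp [hf, List.getD, List.getElem?_eq_getElem hlt]
      rw [← hchar k hk, h1, List.getElem?_map, List.getElem?_eq_getElem hkL]
      rfl
    · rw [List.getElem?_eq_none (by omega : v.length ≤ k),
        List.getElem?_eq_none (by simp [hLlen]; omega)]
  -- u = (range n).map f
  have hu : u = (List.range n).map f := by
    apply List.ext_getElem?
    intro k
    by_cases hk : k < n
    · rw [List.getElem?_map, List.getElem?_eq_getElem hk,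
        List.getElem?_eq_getElem (by simpa using hk), List.getElem_range]
      simp [hf, List.getD, List.getElem?_eq_getElem hk]
    · rw [List.getElem?_eq_none (by omega : u.length ≤ k),
        List.getElem?_eq_none (by simp; omega)]
  have hzero : ∀ i ∈ List.range n, i ∉ L → f i = none := by
    intro i hi hni
    have hiY : i ∉ Y := fun h => hni ((Y.mem_sort _).2 h)
    have := hblank i (List.mem_range.1 hi) hiY
    have hilt : i < n := List.mem_range.1 hi
    simp [hf, List.getD, this]
  have key := filterMap_sublist_eq (f := f) hsub List.nodup_range hzero
  calc del u = (List.range n).filterMap f := by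
        rw [del, hu, List.reduceOption, List.filterMap_map]; rfl
    _ = L.filterMap f := key
    _ = del v := by rw [del, hv, List.reduceOption, List.filterMap_map]; rfl
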